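/- Let s>0, y_1>0, y_2>0, and ξ_1,ξ_2∈ℕ_0. Define d(y,m)=y^m Γ(2s)/Γ(2s+m), D(y_1,y_2;ξ_1,ξ_2)=d(y_1,ξ_1)d(y_2,ξ_2), and for 1≤k≤n, φ_s(k,n) = (1/k)·Γ(n+1)Γ(n-k+2s)/(Γ(n-k+1)Γ(n+2s)). Then ∫_0^{y_1}(dα/α)(1-α/y_1)^{2s-1}[D(y_1-α,y_2+α;ξ_1,ξ_2)-D(y_1,y_2;ξ_1,ξ_2)] + ∫_0^{y_2}(dα/α)(1-α/y_2)^{2s-1}[D(y_1+α,y_2-α;ξ_1,ξ_2)-D(y_1,y_2;ξ_1,ξ_2)] = Σ_{k=1}^{ξ_1} φ_s(k,ξ_1)[D(y_1,y_2;ξ_1-k,ξ_2+k)-D(y_1,y_2;ξ_1,ξ_2)] + Σ_{k=1}^{ξ_2} φ_s(k,ξ_2)[D(y_1,y_2;ξ_1+k,ξ_2-k)-D(y_1,y_2;ξ_1,ξ_2)]. -/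

import Mathlib

open MeasureTheory Real
open scoped Nat

noncomputable section

namespace HeatModel

/-- Single-site duality function `d(y,m) = y^m Γ(2s)/Γ(2s+m)`. -/
def dFun (s : ℝ) (y : ℝ) (m : ℕ) : ℝ := y ^ m * Real.Gamma (2 * s) / Real.Gamma (2 * s + m)

/-- Two-site duality function. -/
def DFun (s : ℝ) (y₁ y₂ : ℝ) (ξ₁ ξ₂ : ℕ) : ℝ := dFun s y₁ ξ₁ * dFun s y₂ ξ₂

/-- The jump rates `φ_s(k,n)` of the harmonic dual process. -/
def phi (s : ℝ) (k n : ℕ) : ℝ :=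
  if 1 ≤ k ∧ k ≤ n then
    (1 / (k : ℝ)) * (Real.Gamma ((n : ℝ) + 1) * Real.Gamma ((n : ℝ) - (k : ℝ) + 2 * s)) /
      (Real.Gamma ((n : ℝ) - (k : ℝ) + 1) * Real.Gamma ((n : ℝ) + 2 * s))
  else 0

/-- The Euler Beta function in terms of `Real.Gamma`. -/
def Bfun (a b : ℝ) : ℝ := Real.Gamma a * Real.Gamma b / Real.Gamma (a + b)

lemma DFun_comm (s x y : ℝ) (ξ η : ℕ) : DFun s x y ξ η = DFun s y x η ξ :=
  mul_comm _ _

lemma Bfun_one_left {b : ℝ} (hb : 0 < b) : Bfun 1 b = 1 / b := by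
  have h1 : Real.Gamma (1 + b) = b * Real.Gamma b := by
    rw [add_comm, Real.Gamma_add_one hb.ne']
  rw [Bfun, Real.Gamma_one, h1]
  rw [one_mul]
  rw [div_eq_div_iff (by positivity) hb.ne']
  ring

lemma Bfun_rec {a b : ℝ} (ha : 0 < a) (hb : 0 < b) :
    Bfun a b = Bfun (a + 1) b + Bfun a (b + 1) := by
  have hab : (0:ℝ) < a + b := by linarith
  have h1 : Real.Gamma (a + 1) = a * Real.Gamma a := Real.Gamma_add_one ha.ne'
  have h2 : Real.Gamma (b + 1) = b * Real.Gamma b := Real.Gamma_add_one hb.ne'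
  have h3 : Real.Gamma (a + b + 1) = (a + b) * Real.Gamma (a + b) :=
    Real.Gamma_add_one hab.ne'
  have e1 : a + 1 + b = a + b + 1 := by ring
  have e2 : a + (b + 1) = a + b + 1 := by ring
  rw [Bfun, Bfun, Bfun, e1, e2, h1, h2, h3]
  have hG : Real.Gamma (a + b) ≠ 0 := (Real.Gamma_pos_of_pos hab).ne'
  field_simp

lemma Bfun_sub {a b : ℝ} (ha : 0 < a) (hb : 0 < b) :
    Bfun a (b + 1) = Bfun a b - Bfun (a + 1) b := by
  rw [Bfun_rec ha hb]; ring

/-- Real Beta integral. -/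
lemma integral_beta {u v : ℝ} (hu : 0 < u) (hv : 0 < v) :
    ∫ x in (0:ℝ)..1, x ^ (u - 1) * (1 - x) ^ (v - 1) = Bfun u v := by
  have key := Complex.Gamma_mul_Gamma_eq_betaIntegral (s := (u:ℂ)) (t := (v:ℂ))
    (by simpa using hu) (by simpa using hv)
  have hint : Complex.betaIntegral (u:ℂ) (v:ℂ)
      = ((∫ x in (0:ℝ)..1, x ^ (u - 1) * (1 - x) ^ (v - 1) : ℝ) : ℂ) := by
    rw [Complex.betaIntegral, ← intervalIntegral.integral_ofReal]
    apply intervalIntegral.integral_congr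
    intro x hx
    rw [Set.uIcc_of_le (by norm_num : (0:ℝ) ≤ 1)] at hx
    push_cast
    rw [Complex.ofReal_cpow hx.1, Complex.ofReal_cpow (by linarith [hx.2] : (0:ℝ) ≤ 1 - x)]
    push_cast
    ring
  rw [hint] at key
  have hGuv : Complex.Gamma ((u:ℂ) + v) = ((Real.Gamma (u + v) : ℝ) : ℂ) := by
    rw [← Complex.ofReal_add, Complex.Gamma_ofReal]
  rw [Complex.Gamma_ofReal, Complex.Gamma_ofReal, hGuv] at key
  have key2 : Real.Gamma u * Real.Gamma v
      = Real.Gamma (u + v) * ∫ x in (0:ℝ)..1, x ^ (u - 1) * (1 - x) ^ (v - 1) := by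
    exact_mod_cast key
  rw [Bfun, eq_div_iff (Real.Gamma_pos_of_pos (by linarith)).ne', key2]
  ring

lemma integrableOn_g {y β : ℝ} (hy : 0 < y) (hβ : 0 < β) (n : ℕ) :
    IntegrableOn (fun a => (1 - a / y) ^ (β - 1) * a ^ n) (Set.Ioo 0 y) := by
  have h1 : IntervalIntegrable (fun x : ℝ => x ^ (β - 1)) volume 0 y :=
    intervalIntegral.intervalIntegrable_rpow' (by linarith)
  have h2 : IntervalIntegrable (fun a : ℝ => (y - a) ^ (β - 1)) volume 0 y := by
    have h := (h1.comp_sub_left y).symm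
    simpa using h
  have h3 : IntervalIntegrable
      (fun a : ℝ => (y - a) ^ (β - 1) * (a ^ n * (y ^ (β - 1))⁻¹)) volume 0 y :=
    h2.mul_continuousOn (by fun_prop)
  have h4 : IntegrableOn (fun a : ℝ => (y - a) ^ (β - 1) * (a ^ n * (y ^ (β - 1))⁻¹))
      (Set.Ioo 0 y) := (h3.1).mono_set Set.Ioo_subset_Ioc_self
  refine h4.congr_fun ?_ measurableSet_Ioo
  intro a ha
  show (y - a) ^ (β - 1) * (a ^ n * (y ^ (β - 1))⁻¹) = (1 - a / y) ^ (β - 1) * a ^ n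
  have h5 : 1 - a / y = (y - a) / y := by field_simp
  rw [h5, Real.div_rpow (by linarith [ha.2]) hy.le]
  field_simp

lemma integral_g {y β : ℝ} (hy : 0 < y) (hβ : 0 < β) (n : ℕ) :
    ∫ a in Set.Ioo 0 y, (1 - a / y) ^ (β - 1) * a ^ n
      = y ^ (n + 1) * Bfun (↑n + 1) β := by
  rw [← MeasureTheory.integral_Ioc_eq_integral_Ioo, ← intervalIntegral.integral_of_le hy.le]
  have h0 : (fun a : ℝ => (1 - a / y) ^ (β - 1) * a ^ n)
      = fun a : ℝ => (fun t : ℝ => (1 - t) ^ (β - 1) * (y * t) ^ n) (a / y) := by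
    funext a
    simp only []
    rw [mul_div_cancel₀ _ hy.ne']
  rw [h0, intervalIntegral.integral_comp_div (fun t : ℝ => (1 - t) ^ (β - 1) * (y * t) ^ n)
    hy.ne']
  rw [zero_div, div_self hy.ne']
  have h1 : ∫ t in (0:ℝ)..1, (1 - t) ^ (β - 1) * (y * t) ^ n
      = y ^ n * ∫ t in (0:ℝ)..1, t ^ ((n : ℝ) + 1 - 1) * (1 - t) ^ (β - 1) := by
    rw [← intervalIntegral.integral_const_mul]
    apply intervalIntegral.integral_congr
    intro t _
    show (1 - t) ^ (β - 1) * (y * t) ^ n = y ^ n * (t ^ ((n:ℝ) + 1 - 1) * (1 - t) ^ (β - 1))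
    have he : (n : ℝ) + 1 - 1 = (n : ℝ) := by ring
    rw [he, Real.rpow_natCast]
    ring
  rw [h1, integral_beta (by positivity) hβ, smul_eq_mul, pow_succ]
  ring

lemma coeff_gamma {s : ℝ} (hs : 0 < s) (ξ : ℕ) {k n : ℕ} (hk : 1 ≤ k) (hkn : k ≤ n) :
    Real.Gamma (2*s) / Real.Gamma (2*s + ξ) * (Real.Gamma (2*s) / Real.Gamma (2*s + n)) *
      (n.choose k) * Bfun k (2*s + ξ)
    = phi s k n * (Real.Gamma (2*s) / Real.Gamma (2*s + ↑(ξ+k))) *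
        (Real.Gamma (2*s) / Real.Gamma (2*s + ↑(n-k))) := by
  obtain ⟨k', rfl⟩ : ∃ k', k = k' + 1 := ⟨k - 1, by omega⟩
  have h2s : (0:ℝ) < 2*s := by linarith
  rw [phi, if_pos ⟨hk, hkn⟩, Bfun]
  have e1 : (n:ℝ) - ↑(k'+1) + 2*s = 2*s + ↑(n-(k'+1)) := by
    push_cast [Nat.cast_sub hkn]; ring
  have e2 : (n:ℝ) - ↑(k'+1) + 1 = ↑(n-(k'+1)) + 1 := by
    push_cast [Nat.cast_sub hkn]; ring
  have e3 : (↑(k'+1):ℝ) + (2*s + ξ) = 2*s + ↑(ξ+(k'+1)) := by push_cast; ring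
  have e4 : (n:ℝ) + 2*s = 2*s + ↑n := by ring
  rw [e1, e2, e3, e4]
  have hGn : Real.Gamma ((n:ℝ) + 1) = n ! := Real.Gamma_nat_eq_factorial n
  have hGnk : Real.Gamma ((↑(n-(k'+1)):ℝ) + 1) = (n-(k'+1))! :=
    Real.Gamma_nat_eq_factorial (n-(k'+1))
  have hGk : Real.Gamma ((↑(k'+1)):ℝ) = k' ! := by
    push_cast
    exact Real.Gamma_nat_eq_factorial k'
  have hch : ((n.choose (k'+1)) : ℝ) = n ! / ((k'+1)! * (n-(k'+1))!) :=
    Nat.cast_choose ℝ hkn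
  have hc : ((↑(k'+1)):ℝ) = (k':ℝ)+1 := by push_cast; ring
  have hfac : (((k'+1)!:ℕ) : ℝ) = ((k':ℝ)+1) * k' ! := by
    push_cast [Nat.factorial_succ]; ring
  rw [hGn, hGnk, hGk, hch, hfac, hc]
  have hA : Real.Gamma (2*s) ≠ 0 := (Real.Gamma_pos_of_pos h2s).ne'
  have hB : Real.Gamma (2*s + ξ) ≠ 0 :=
    (Real.Gamma_pos_of_pos (by positivity)).ne'
  have hC : Real.Gamma (2*s + n) ≠ 0 :=
    (Real.Gamma_pos_of_pos (by positivity)).ne'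
  have hD : Real.Gamma (2*s + ↑(ξ+(k'+1))) ≠ 0 :=
    (Real.Gamma_pos_of_pos (by positivity)).ne'
  have hE : Real.Gamma (2*s + ↑(n-(k'+1))) ≠ 0 :=
    (Real.Gamma_pos_of_pos (by positivity)).ne'
  have hk'f : (k' ! : ℝ) ≠ 0 := by positivity
  have hnf : ((n:ℕ)! : ℝ) ≠ 0 := by positivity
  have hnkf : ((n-(k'+1))! : ℝ) ≠ 0 := by positivity
  have hk1 : ((k':ℝ)+1) ≠ 0 := by positivity
  set A := Real.Gamma (2*s)
  set B := Real.Gamma (2*s + ξ)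
  set C := Real.Gamma (2*s + n)
  set D := Real.Gamma (2*s + ↑(ξ+(k'+1)))
  set E := Real.Gamma (2*s + ↑(n-(k'+1)))
  set P := ((n ! : ℕ) : ℝ)
  set Q := ((k' ! : ℕ) : ℝ)
  set R := (((n-(k'+1))! : ℕ) : ℝ)
  field_simp

lemma phi_eq {s : ℝ} (hs : 0 < s) {k n : ℕ} (hk : 1 ≤ k) (hkn : k ≤ n) :
    phi s k n = (n.choose k) * Bfun k (2*s + ↑(n-k)) := by
  obtain ⟨k', rfl⟩ : ∃ k', k = k' + 1 := ⟨k - 1, by omega⟩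
  have h2s : (0:ℝ) < 2*s := by linarith
  rw [phi, if_pos ⟨hk, hkn⟩, Bfun]
  have e1 : (n:ℝ) - ↑(k'+1) + 2*s = 2*s + ↑(n-(k'+1)) := by
    push_cast [Nat.cast_sub hkn]; ring
  have e2 : (n:ℝ) - ↑(k'+1) + 1 = ↑(n-(k'+1)) + 1 := by
    push_cast [Nat.cast_sub hkn]; ring
  have e3 : (↑(k'+1):ℝ) + (2*s + ↑(n-(k'+1))) = 2*s + n := by
    push_cast [Nat.cast_sub hkn]; ring
  have e4 : (n:ℝ) + 2*s = 2*s + ↑n := by ring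
  rw [e1, e2, e3, e4]
  have hGn : Real.Gamma ((n:ℝ) + 1) = n ! := Real.Gamma_nat_eq_factorial n
  have hGnk : Real.Gamma ((↑(n-(k'+1)):ℝ) + 1) = (n-(k'+1))! :=
    Real.Gamma_nat_eq_factorial (n-(k'+1))
  have hGk : Real.Gamma ((↑(k'+1)):ℝ) = k' ! := by
    push_cast
    exact Real.Gamma_nat_eq_factorial k'
  have hch : ((n.choose (k'+1)) : ℝ) = n ! / ((k'+1)! * (n-(k'+1))!) :=
    Nat.cast_choose ℝ hkn
  have hc : ((↑(k'+1)):ℝ) = (k':ℝ)+1 := by push_cast; ring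
  have hfac : (((k'+1)!:ℕ) : ℝ) = ((k':ℝ)+1) * k' ! := by
    push_cast [Nat.factorial_succ]; ring
  rw [hGn, hGnk, hGk, hch, hfac, hc]
  have hC : Real.Gamma (2*s + n) ≠ 0 :=
    (Real.Gamma_pos_of_pos (by positivity)).ne'
  have hE : Real.Gamma (2*s + ↑(n-(k'+1))) ≠ 0 :=
    (Real.Gamma_pos_of_pos (by positivity)).ne'
  have hk'f : (k' ! : ℝ) ≠ 0 := by positivity
  have hnkf : ((n-(k'+1))! : ℝ) ≠ 0 := by positivity
  have hk1 : ((k':ℝ)+1) ≠ 0 := by positivity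
  set C := Real.Gamma (2*s + n)
  set E := Real.Gamma (2*s + ↑(n-(k'+1)))
  set P := ((n ! : ℕ) : ℝ)
  set Q := ((k' ! : ℕ) : ℝ)
  set R := (((n-(k'+1))! : ℕ) : ℝ)
  field_simp

lemma key_ind {β : ℝ} (hβ : 0 < β) (n : ℕ) :
    ∑ j ∈ Finset.range n, ((n.choose (j+1)) : ℝ) * Bfun (↑j+1) (↑(n-1-j) + β)
      = ∑ m ∈ Finset.range n, 1 / (β + m) := by
  induction n with
  | zero => simp
  | succ n ih =>
    have hsplit : ∀ j ∈ Finset.range (n+1),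
        (((n+1).choose (j+1)) : ℝ) * Bfun (↑j+1) (↑(n+1-1-j) + β)
        = ((n.choose j) : ℝ) * Bfun (↑j+1) (↑(n-j) + β)
          + ((n.choose (j+1)) : ℝ) * Bfun (↑j+1) (↑(n-j) + β) := by
      intro j hj
      have : (n+1).choose (j+1) = n.choose j + n.choose (j+1) := Nat.choose_succ_succ n j
      have e : n+1-1-j = n-j := by omega
      rw [this, e]
      push_cast
      ring
    rw [Finset.sum_congr rfl hsplit, Finset.sum_add_distrib]
    have hT2 : ∑ j ∈ Finset.range (n+1), ((n.choose (j+1)) : ℝ) * Bfun (↑j+1) (↑(n-j) + β)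
        = (∑ j ∈ Finset.range n, ((n.choose (j+1)) : ℝ) * Bfun (↑j+1) (↑(n-1-j) + β))
          - ∑ j ∈ Finset.range n, ((n.choose (j+1)) : ℝ) * Bfun (↑j+1+1) (↑(n-1-j) + β) := by
      rw [Finset.sum_range_succ, Nat.choose_succ_self]
      push_cast
      rw [zero_mul, add_zero, ← Finset.sum_sub_distrib]
      apply Finset.sum_congr rfl
      intro j hj
      have hj' : j < n := Finset.mem_range.mp hj
      have e : (↑(n-j) : ℝ) + β = (↑(n-1-j) + β) + 1 := by
        have : n - j = (n-1-j) + 1 := by omega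
        rw [this]; push_cast; ring
      rw [e, Bfun_sub (by positivity) (by positivity)]
      ring
    have hT1 : ∑ j ∈ Finset.range (n+1), ((n.choose j) : ℝ) * Bfun (↑j+1) (↑(n-j) + β)
        = (∑ j ∈ Finset.range n, ((n.choose (j+1)) : ℝ) * Bfun (↑j+1+1) (↑(n-1-j) + β))
          + 1 / (β + n) := by
      rw [Finset.sum_range_succ']
      congr 1
      · apply Finset.sum_congr rfl
        intro j hj
        have e : n - (j+1) = n-1-j := by omega
        rw [e]
        push_cast
        ring
      · simp only [Nat.choose_zero_right, Nat.cast_one, one_mul, Nat.sub_zero, Nat.cast_zero,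
          zero_add]
        rw [Bfun_one_left (by positivity)]
        rw [add_comm β (n:ℝ)]
    rw [hT1, hT2, Finset.sum_range_succ, ih]
    ring

lemma icc_map (n : ℕ) : Finset.Icc 1 n
    = Finset.map ⟨fun j => j+1, add_left_injective 1⟩ (Finset.range n) := by
  ext x
  simp only [Finset.mem_Icc, Finset.mem_map, Finset.mem_range, Function.Embedding.coeFn_mk]
  constructor
  · rintro ⟨hx1, hx2⟩; exact ⟨x - 1, by omega, by show x - 1 + 1 = x; omega⟩
  · rintro ⟨j, hj, rfl⟩; show 1 ≤ j + 1 ∧ j + 1 ≤ n; omega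

lemma sum_phi {s : ℝ} (hs : 0 < s) (n : ℕ) :
    ∑ k ∈ Finset.Icc 1 n, phi s k n = ∑ m ∈ Finset.range n, 1 / (2*s + m) := by
  rw [icc_map n, Finset.sum_map]
  simp only [Function.Embedding.coeFn_mk]
  rw [← key_ind (by linarith : (0:ℝ) < 2*s) n]
  apply Finset.sum_congr rfl
  intro j hj
  have hj' : j < n := Finset.mem_range.mp hj
  rw [phi_eq hs (by omega) (by omega : j + 1 ≤ n)]
  have e1 : n - (j+1) = n - 1 - j := by omega
  have e2 : ((j+1 : ℕ) : ℝ) = (j:ℝ) + 1 := by push_cast; ring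
  rw [e1, e2, add_comm (2*s) ((n-1-j : ℕ):ℝ)]

lemma side {s : ℝ} (hs : 0 < s) {y₁ y₂ : ℝ} (h₁ : 0 < y₁) (h₂ : 0 < y₂) (ξ₁ ξ₂ : ℕ) :
    ∫ a in Set.Ioo 0 y₁,
        (1 - a / y₁) ^ (2 * s - 1) / a * (DFun s (y₁ - a) (y₂ + a) ξ₁ ξ₂ - DFun s y₁ y₂ ξ₁ ξ₂)
    = (∑ k ∈ Finset.Icc 1 ξ₂, phi s k ξ₂ * DFun s y₁ y₂ (ξ₁ + k) (ξ₂ - k))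
      - (∑ m ∈ Finset.range ξ₁, 1 / (2 * s + m)) * DFun s y₁ y₂ ξ₁ ξ₂ := by
  have h2s : (0:ℝ) < 2 * s := by linarith
  set A := Real.Gamma (2*s) with hA
  set B₁ := Real.Gamma (2*s + ξ₁) with hB₁
  set B₂ := Real.Gamma (2*s + ξ₂) with hB₂
  set E : ℝ := -(A/B₁ * (A/B₂) * y₁^(ξ₁-1) * y₂^ξ₂) with hE
  set Cf : ℕ → ℝ := fun j => A/B₁ * (A/B₂) * y₁^ξ₁ * (ξ₂.choose (j+1)) * y₂^(ξ₂-1-j) with hCf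
  have hpt : ∀ a ∈ Set.Ioo 0 y₁,
      (1 - a / y₁) ^ (2 * s - 1) / a * (DFun s (y₁ - a) (y₂ + a) ξ₁ ξ₂ - DFun s y₁ y₂ ξ₁ ξ₂)
      = (∑ m ∈ Finset.range ξ₁, E * ((1 - a / y₁) ^ (2*s + ↑m - 1) * a ^ (0:ℕ)))
        + ∑ j ∈ Finset.range ξ₂, Cf j * ((1 - a / y₁) ^ (2*s + ↑ξ₁ - 1) * a ^ j) := by
    rintro a ⟨ha0, hay⟩
    have hu : 0 < 1 - a / y₁ := by
      rw [sub_pos, div_lt_one h₁]; exact hay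
    have hne : a ≠ 0 := ne_of_gt ha0
    have hS1 : ∑ m ∈ Finset.range ξ₁, E * ((1 - a / y₁) ^ (2*s + ↑m - 1) * a ^ (0:ℕ))
        = E * (1 - a / y₁) ^ (2*s - 1) * ∑ m ∈ Finset.range ξ₁, (1 - a / y₁) ^ m := by
      rw [Finset.mul_sum]
      apply Finset.sum_congr rfl
      intro m _
      rw [show 2*s + ↑m - 1 = (2 * s - 1) + (m:ℝ) by ring, Real.rpow_add hu,
        Real.rpow_natCast, pow_zero]
      ring
    have hS2 : ∑ j ∈ Finset.range ξ₂, Cf j * ((1 - a / y₁) ^ (2*s + ↑ξ₁ - 1) * a ^ j)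
        = A/B₁ * (A/B₂) * y₁^ξ₁ * ((1 - a / y₁) ^ (2*s - 1) * (1 - a / y₁) ^ ξ₁)
          * ∑ j ∈ Finset.range ξ₂, (ξ₂.choose (j+1)) * y₂^(ξ₂-1-j) * a ^ j := by
      rw [Finset.mul_sum]
      apply Finset.sum_congr rfl
      intro j _
      rw [show 2*s + ↑ξ₁ - 1 = (2 * s - 1) + (ξ₁:ℝ) by ring, Real.rpow_add hu,
        Real.rpow_natCast, hCf]
      ring
    rw [hS1, hS2]
    set P := ∑ m ∈ Finset.range ξ₁, (1 - a / y₁) ^ m with hP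
    set Q := ∑ j ∈ Finset.range ξ₂, ((ξ₂.choose (j+1)) : ℝ) * y₂^(ξ₂-1-j) * a ^ j with hQ
    have hG1 : y₁^(ξ₁-1) * (P * a) = y₁^ξ₁ * (1 - (1 - a / y₁) ^ ξ₁) := by
      have hg := geom_sum_mul (1 - a / y₁) ξ₁
      have hg' : P * a = y₁ * (1 - (1 - a / y₁) ^ ξ₁) := by
        have h3 : P * ((1 - a / y₁) - 1) = (1 - a / y₁) ^ ξ₁ - 1 := hg
        have h4 : (1 - a / y₁) - 1 = -(a / y₁) := by ring
        rw [h4] at h3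
        have h5 : P * (a / y₁) = 1 - (1 - a / y₁) ^ ξ₁ := by linarith [h3]
        calc P * a = (P * (a / y₁)) * y₁ := by field_simp
        _ = y₁ * (1 - (1 - a / y₁) ^ ξ₁) := by rw [h5]; ring
      cases ξ₁ with
      | zero => simp [hP]
      | succ t =>
        have ht : t + 1 - 1 = t := rfl
        rw [ht, hg', pow_succ]
        ring
    have hG2 : Q * a = (a + y₂) ^ ξ₂ - y₂ ^ ξ₂ := by
      rw [add_pow, Finset.sum_range_succ']
      simp only [pow_zero, one_mul, Nat.choose_zero_right, Nat.cast_one, mul_one, Nat.sub_zero]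
      rw [hQ, Finset.sum_mul]
      rw [add_sub_cancel_right]
      apply Finset.sum_congr rfl
      intro j hj
      have e : ξ₂ - 1 - j = ξ₂ - (j+1) := by omega
      rw [e]
      ring
    rw [div_mul_eq_mul_div, div_eq_iff hne]
    have hpow : (y₁ - a) ^ ξ₁ = y₁ ^ ξ₁ * (1 - a / y₁) ^ ξ₁ := by
      rw [show y₁ - a = y₁ * (1 - a / y₁) by field_simp, mul_pow]
    simp only [DFun, dFun]
    rw [hpow]
    linear_combination ((1 - a / y₁) ^ (2*s-1) * (A/B₁) * (A/B₂) * y₂^ξ₂) * hG1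
      + (-((1 - a / y₁) ^ (2*s-1) * (1 - a / y₁) ^ ξ₁ * (A/B₁) * (A/B₂) * y₁^ξ₁)) * hG2
  rw [MeasureTheory.setIntegral_congr_fun measurableSet_Ioo hpt]
  have hint1 : ∀ m : ℕ, IntegrableOn
      (fun a => E * ((1 - a / y₁) ^ (2*s + ↑m - 1) * a ^ (0:ℕ))) (Set.Ioo 0 y₁) :=
    fun m => (integrableOn_g h₁ (by positivity) 0).const_mul E
  have hint2 : ∀ j : ℕ, IntegrableOn
      (fun a => Cf j * ((1 - a / y₁) ^ (2*s + ↑ξ₁ - 1) * a ^ j)) (Set.Ioo 0 y₁) :=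
    fun j => (integrableOn_g h₁ (by positivity) j).const_mul (Cf j)
  rw [MeasureTheory.integral_add
    (MeasureTheory.integrable_finset_sum _ (fun m _ => hint1 m))
    (MeasureTheory.integrable_finset_sum _ (fun j _ => hint2 j)),
    MeasureTheory.integral_finset_sum _ (fun m _ => hint1 m),
    MeasureTheory.integral_finset_sum _ (fun j _ => hint2 j)]
  simp_rw [MeasureTheory.integral_const_mul]
  have hval1 : ∀ m : ℕ, ∫ a in Set.Ioo 0 y₁, (1 - a / y₁) ^ (2*s + ↑m - 1) * a ^ (0:ℕ)
      = y₁ ^ (0+1) * Bfun (↑(0:ℕ) + 1) (2*s + ↑m) :=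
    fun m => integral_g h₁ (by positivity) 0
  have hval2 : ∀ j : ℕ, ∫ a in Set.Ioo 0 y₁, (1 - a / y₁) ^ (2*s + ↑ξ₁ - 1) * a ^ j
      = y₁ ^ (j+1) * Bfun (↑j + 1) (2*s + ↑ξ₁) :=
    fun j => integral_g h₁ (by positivity) j
  simp_rw [hval1, hval2]
  have hsum1 : ∑ m ∈ Finset.range ξ₁, E * (y₁ ^ (0+1) * Bfun (↑(0:ℕ) + 1) (2*s + ↑m))
      = -((∑ m ∈ Finset.range ξ₁, 1 / (2 * s + m)) * DFun s y₁ y₂ ξ₁ ξ₂) := by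
    rw [Finset.sum_mul, ← Finset.sum_neg_distrib]
    apply Finset.sum_congr rfl
    intro m hm
    have hm' : m < ξ₁ := Finset.mem_range.mp hm
    have h0 : ((0:ℕ):ℝ) + 1 = 1 := by norm_num
    rw [h0, Bfun_one_left (by positivity), hE]
    simp only [DFun, dFun]
    rw [← hA, ← hB₁, ← hB₂]
    obtain ⟨t, rfl⟩ : ∃ t, ξ₁ = t + 1 := ⟨ξ₁ - 1, by omega⟩
    have ht : t + 1 - 1 = t := rfl
    rw [ht, pow_succ]
    ring
  have hsum2 : ∑ j ∈ Finset.range ξ₂, Cf j * (y₁ ^ (j+1) * Bfun (↑j + 1) (2*s + ↑ξ₁))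
      = ∑ k ∈ Finset.Icc 1 ξ₂, phi s k ξ₂ * DFun s y₁ y₂ (ξ₁ + k) (ξ₂ - k) := by
    rw [icc_map ξ₂, Finset.sum_map]
    simp only [Function.Embedding.coeFn_mk]
    apply Finset.sum_congr rfl
    intro j hj
    have hj' : j < ξ₂ := Finset.mem_range.mp hj
    have hcg := coeff_gamma hs ξ₁ (k := j+1) (n := ξ₂) (by omega) (by omega)
    rw [hCf]
    simp only [DFun, dFun]
    have e1 : ξ₂ - 1 - j = ξ₂ - (j+1) := by omega
    have e2 : ((j+1:ℕ):ℝ) = (j:ℝ) + 1 := by push_cast; ring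
    rw [← hA, ← hB₁, ← hB₂] at hcg
    rw [e1]
    rw [e2] at hcg
    linear_combination (y₁^(ξ₁+(j+1)) * y₂^(ξ₂-(j+1))) * hcg
  rw [hsum1, hsum2]
  ring

/-- Local bulk duality: the Levy exchange generator acting on the continuous variables of
the duality function equals the harmonic dual generator acting on the discrete variables. -/
theorem bulk_duality (s : ℝ) (hs : 0 < s) (y₁ y₂ : ℝ) (h₁ : 0 < y₁) (h₂ : 0 < y₂)
    (ξ₁ ξ₂ : ℕ) :
    (∫ a in Set.Ioo 0 y₁,
        (1 - a / y₁) ^ (2 * s - 1) / a * (DFun s (y₁ - a) (y₂ + a) ξ₁ ξ₂ - DFun s y₁ y₂ ξ₁ ξ₂))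
      + (∫ a in Set.Ioo 0 y₂,
          (1 - a / y₂) ^ (2 * s - 1) / a * (DFun s (y₁ + a) (y₂ - a) ξ₁ ξ₂ - DFun s y₁ y₂ ξ₁ ξ₂))
    = (∑ k ∈ Finset.Icc 1 ξ₁,
        phi s k ξ₁ * (DFun s y₁ y₂ (ξ₁ - k) (ξ₂ + k) - DFun s y₁ y₂ ξ₁ ξ₂))
      + ∑ k ∈ Finset.Icc 1 ξ₂,
          phi s k ξ₂ * (DFun s y₁ y₂ (ξ₁ + k) (ξ₂ - k) - DFun s y₁ y₂ ξ₁ ξ₂) := by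
  have e2 : (∫ a in Set.Ioo 0 y₂,
      (1 - a / y₂) ^ (2 * s - 1) / a * (DFun s (y₁ + a) (y₂ - a) ξ₁ ξ₂ - DFun s y₁ y₂ ξ₁ ξ₂))
      = ∫ a in Set.Ioo 0 y₂,
        (1 - a / y₂) ^ (2 * s - 1) / a * (DFun s (y₂ - a) (y₁ + a) ξ₂ ξ₁ - DFun s y₂ y₁ ξ₂ ξ₁) := by
    apply MeasureTheory.setIntegral_congr_fun measurableSet_Ioo
    intro a _
    show (1 - a / y₂) ^ (2 * s - 1) / a * (DFun s (y₁ + a) (y₂ - a) ξ₁ ξ₂ - DFun s y₁ y₂ ξ₁ ξ₂)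
        = (1 - a / y₂) ^ (2 * s - 1) / a * (DFun s (y₂ - a) (y₁ + a) ξ₂ ξ₁ - DFun s y₂ y₁ ξ₂ ξ₁)
    rw [DFun_comm s (y₁ + a) (y₂ - a) ξ₁ ξ₂, DFun_comm s y₁ y₂ ξ₁ ξ₂]
  rw [side hs h₁ h₂ ξ₁ ξ₂, e2, side hs h₂ h₁ ξ₂ ξ₁]
  have hc1 : ∑ k ∈ Finset.Icc 1 ξ₁, phi s k ξ₁ * DFun s y₂ y₁ (ξ₂ + k) (ξ₁ - k)
      = ∑ k ∈ Finset.Icc 1 ξ₁, phi s k ξ₁ * DFun s y₁ y₂ (ξ₁ - k) (ξ₂ + k) :=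
    Finset.sum_congr rfl (fun k _ => by rw [DFun_comm s y₂ y₁ (ξ₂ + k) (ξ₁ - k)])
  have hc0 : DFun s y₂ y₁ ξ₂ ξ₁ = DFun s y₁ y₂ ξ₁ ξ₂ := DFun_comm s y₂ y₁ ξ₂ ξ₁
  rw [hc1, hc0]
  have hr1 : ∑ k ∈ Finset.Icc 1 ξ₁, phi s k ξ₁ * (DFun s y₁ y₂ (ξ₁ - k) (ξ₂ + k)
        - DFun s y₁ y₂ ξ₁ ξ₂)
      = (∑ k ∈ Finset.Icc 1 ξ₁, phi s k ξ₁ * DFun s y₁ y₂ (ξ₁ - k) (ξ₂ + k))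
        - (∑ k ∈ Finset.Icc 1 ξ₁, phi s k ξ₁) * DFun s y₁ y₂ ξ₁ ξ₂ := by
    rw [Finset.sum_mul, ← Finset.sum_sub_distrib]
    exact Finset.sum_congr rfl (fun k _ => by ring)
  have hr2 : ∑ k ∈ Finset.Icc 1 ξ₂, phi s k ξ₂ * (DFun s y₁ y₂ (ξ₁ + k) (ξ₂ - k)
        - DFun s y₁ y₂ ξ₁ ξ₂)
      = (∑ k ∈ Finset.Icc 1 ξ₂, phi s k ξ₂ * DFun s y₁ y₂ (ξ₁ + k) (ξ₂ - k))
        - (∑ k ∈ Finset.Icc 1 ξ₂, phi s k ξ₂) * DFun s y₁ y₂ ξ₁ ξ₂ := by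
    rw [Finset.sum_mul, ← Finset.sum_sub_distrib]
    exact Finset.sum_congr rfl (fun k _ => by ring)
  rw [hr1, hr2, sum_phi hs ξ₁, sum_phi hs ξ₂]
  ring

end HeatModel
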